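/- Equality in the log-convexity inequality ‖f₁f₂‖_{A²_{α₁+α₂}} ≤ ‖f₁‖_{A²_{α₁}}·‖f₂‖_{A²_{α₂}} (with both right-hand factors finite and nonzero) holds if and only if there exist constants λ₁, λ₂ ∈ ℂ and w in the unit disc such that fⱼ(z) = λⱼ(1-wz)^{-αⱼ} for j = 1, 2. -/

import Mathlib

noncomputable section

/-- The `n`-th Taylor coefficient of `(1-z)^{-α}`. -/
def binCoeff (α : ℝ) (n : ℕ) : ℝ := Real.Gamma (n + α) / (Real.Gamma α * n.factorial)




lemma binCoeff_zero (α : ℝ) (hα : 0 < α) : binCoeff α 0 = 1 := by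
  simp [binCoeff, div_self (Real.Gamma_pos_of_pos hα).ne']

lemma binCoeff_pos {α : ℝ} (hα : 0 < α) (n : ℕ) : 0 < binCoeff α n := by
  apply div_pos (Real.Gamma_pos_of_pos (by positivity)) 
    (mul_pos (Real.Gamma_pos_of_pos hα) (by exact_mod_cast n.factorial_pos))

lemma binCoeff_succ {α : ℝ} (hα : 0 < α) (n : ℕ) :
    (n + 1 : ℝ) * binCoeff α (n + 1) = (n + α) * binCoeff α n := by
  have h1 : ((n:ℝ) + 1 + α) = ((n:ℝ) + α) + 1 := by ring
  have h2 : Real.Gamma ((n:ℝ) + α + 1) = ((n:ℝ) + α) * Real.Gamma ((n:ℝ) + α) :=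
    Real.Gamma_add_one (by positivity)
  have hΓ : Real.Gamma α ≠ 0 := (Real.Gamma_pos_of_pos hα).ne'
  have hf : (n.factorial : ℝ) ≠ 0 := by exact_mod_cast n.factorial_pos.ne'
  unfold binCoeff
  push_cast
  rw [h1, h2, Nat.factorial_succ]
  push_cast
  field_simp

lemma binCoeff_succ' {α : ℝ} (hα : 0 < α) (n : ℕ) :
    binCoeff α (n + 1) = ((n : ℝ) + α) / (n + 1) * binCoeff α n := by
  have := binCoeff_succ hα n
  field_simp
  linarith

lemma one_le_binCoeff {α : ℝ} (hα : 1 ≤ α) (n : ℕ) : 1 ≤ binCoeff α n := by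
  induction n with
  | zero => rw [binCoeff_zero α (by linarith)]
  | succ n ih =>
    rw [binCoeff_succ' (by linarith) n]
    have h1 : (1:ℝ) ≤ ((n : ℝ) + α) / (n + 1) := by
      rw [le_div_iff₀ (by positivity)]; linarith
    nlinarith

open Finset in
lemma sum_shift_fst {α₁ α₂ : ℝ} (hα₁ : 0 < α₁) (n : ℕ) :
    ∑ p ∈ antidiagonal (n+1), (p.1 : ℝ) * binCoeff α₁ p.1 * binCoeff α₂ p.2
      = ∑ p ∈ antidiagonal n, ((p.1 : ℝ) + α₁) * binCoeff α₁ p.1 * binCoeff α₂ p.2 := by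
  rw [Finset.Nat.antidiagonal_succ, Finset.sum_cons, Finset.sum_map]
  simp only [Function.Embedding.prodMap, Function.Embedding.coeFn_mk, Function.Embedding.refl_apply,
    Nat.cast_zero, zero_mul, zero_add, Prod.map_fst, Prod.map_snd]
  refine Finset.sum_congr rfl fun p _ => ?_
  have h := binCoeff_succ hα₁ p.1
  have : ((p.1.succ : ℝ)) * binCoeff α₁ p.1.succ = ((p.1 : ℝ) + α₁) * binCoeff α₁ p.1 := by
    push_cast at h ⊢; linarith
  rw [this]

open Finset in
lemma sum_shift_snd {α₁ α₂ : ℝ} (hα₂ : 0 < α₂) (n : ℕ) :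
    ∑ p ∈ antidiagonal (n+1), (p.2 : ℝ) * binCoeff α₁ p.1 * binCoeff α₂ p.2
      = ∑ p ∈ antidiagonal n, ((p.2 : ℝ) + α₂) * binCoeff α₁ p.1 * binCoeff α₂ p.2 := by
  rw [Finset.Nat.antidiagonal_succ', Finset.sum_cons, Finset.sum_map]
  simp only [Function.Embedding.prodMap, Function.Embedding.coeFn_mk, Function.Embedding.refl_apply,
    Nat.cast_zero, zero_mul, mul_zero, zero_add, Prod.map_fst, Prod.map_snd]
  refine Finset.sum_congr rfl fun p _ => ?_
  have h := binCoeff_succ hα₂ p.2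
  have h2 : ((p.2.succ : ℝ)) * binCoeff α₂ p.2.succ = ((p.2 : ℝ) + α₂) * binCoeff α₂ p.2 := by
    push_cast at h ⊢; linarith
  calc (p.2.succ : ℝ) * binCoeff α₁ p.1 * binCoeff α₂ p.2.succ
      = ((p.2.succ : ℝ) * binCoeff α₂ p.2.succ) * binCoeff α₁ p.1 := by ring
    _ = (((p.2 : ℝ) + α₂) * binCoeff α₂ p.2) * binCoeff α₁ p.1 := by rw [h2]
    _ = ((p.2 : ℝ) + α₂) * binCoeff α₁ p.1 * binCoeff α₂ p.2 := by ring

open Finset in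
lemma binCoeff_conv {α₁ α₂ : ℝ} (hα₁ : 0 < α₁) (hα₂ : 0 < α₂) (n : ℕ) :
    ∑ p ∈ antidiagonal n, binCoeff α₁ p.1 * binCoeff α₂ p.2 = binCoeff (α₁ + α₂) n := by
  induction n with
  | zero =>
    simp [binCoeff_zero _ hα₁, binCoeff_zero _ hα₂,
      binCoeff_zero (α₁ + α₂) (by positivity)]
  | succ n ih =>
    have key : ((n:ℝ) + 1) * ∑ p ∈ antidiagonal (n+1), binCoeff α₁ p.1 * binCoeff α₂ p.2
        = ((n:ℝ) + (α₁ + α₂)) * ∑ p ∈ antidiagonal n, binCoeff α₁ p.1 * binCoeff α₂ p.2 := by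
      have e1 : ((n:ℝ) + 1) * ∑ p ∈ antidiagonal (n+1), binCoeff α₁ p.1 * binCoeff α₂ p.2
          = ∑ p ∈ antidiagonal (n+1), ((p.1 : ℝ) + p.2) * (binCoeff α₁ p.1 * binCoeff α₂ p.2) := by
        rw [Finset.mul_sum]
        refine Finset.sum_congr rfl fun p hp => ?_
        rw [Finset.HasAntidiagonal.mem_antidiagonal] at hp
        have hp' : ((p.1:ℝ) + p.2) = (n:ℝ) + 1 := by exact_mod_cast hp
        rw [hp']
      rw [e1]
      have e2 : ∀ p : ℕ × ℕ, ((p.1 : ℝ) + p.2) * (binCoeff α₁ p.1 * binCoeff α₂ p.2)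
          = (p.1 : ℝ) * binCoeff α₁ p.1 * binCoeff α₂ p.2
            + (p.2 : ℝ) * binCoeff α₁ p.1 * binCoeff α₂ p.2 := fun p => by ring
      simp only [e2, Finset.sum_add_distrib]
      rw [sum_shift_fst hα₁ n, sum_shift_snd hα₂ n, ← Finset.sum_add_distrib, Finset.mul_sum]
      refine Finset.sum_congr rfl fun p hp => ?_
      rw [Finset.HasAntidiagonal.mem_antidiagonal] at hp
      have hp' : ((p.1:ℝ) + p.2) = (n:ℝ) := by exact_mod_cast hp
      rw [show ((p.1:ℝ) + α₁) * binCoeff α₁ p.1 * binCoeff α₂ p.2 + ((p.2:ℝ) + α₂) * binCoeff α₁ p.1 * binCoeff α₂ p.2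
        = (((p.1:ℝ) + p.2) + (α₁ + α₂)) * (binCoeff α₁ p.1 * binCoeff α₂ p.2) by ring, hp']
    have h2 := binCoeff_succ (show (0:ℝ) < α₁ + α₂ by positivity) n
    rw [ih] at key
    have hpos : ((n:ℝ) + 1) ≠ 0 := by positivity
    push_cast at key h2 ⊢
    apply mul_left_cancel₀ hpos
    rw [key, h2]

open Filter Topology

lemma summable_binCoeff_mul {α : ℝ} (hα : 0 < α) {t : ℝ} (ht0 : 0 ≤ t) (ht : t < 1) :
    Summable (fun n => binCoeff α n * t ^ n) := by
  rcases eq_or_lt_of_le ht0 with h | h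
  · apply summable_of_ne_finset_zero (s := {0})
    intro n hn
    simp only [Finset.mem_singleton] at hn
    rw [← h, zero_pow hn, mul_zero]
  · apply summable_of_ratio_test_tendsto_lt_one ht
    · filter_upwards with n
      exact (mul_pos (binCoeff_pos hα n) (pow_pos h n)).ne'
    · have : ∀ n : ℕ, ‖binCoeff α (n+1) * t ^ (n+1)‖ / ‖binCoeff α n * t ^ n‖
          = ((n : ℝ) + α) / (n + 1) * t := by
        intro n
        rw [binCoeff_succ' hα n]
        rw [Real.norm_of_nonneg (mul_nonneg (mul_nonneg (by positivity) (binCoeff_pos hα n).le) (by positivity)), Real.norm_of_nonneg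
          (mul_nonneg (binCoeff_pos hα n).le (by positivity))]
        rw [pow_succ]
        rw [div_eq_iff (mul_pos (binCoeff_pos hα n) (pow_pos h n)).ne']
        ring
      simp only [this]
      have h1 : Tendsto (fun n : ℕ => ((n : ℝ) + α) / (n + 1)) atTop (𝓝 1) := by
        have h2 : (fun n : ℕ => ((n : ℝ) + α) / (n + 1)) = fun n : ℕ => 1 + (α - 1) / ((n:ℝ) + 1) := by
          funext n
          field_simp
          ring
        rw [h2]
        have h3 : Tendsto (fun n : ℕ => (α - 1) / ((n:ℝ) + 1)) atTop (𝓝 0) := by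
          apply Tendsto.div_atTop tendsto_const_nhds
          exact tendsto_atTop_add_const_right _ _ tendsto_natCast_atTop_atTop
        simpa using (tendsto_const_nhds (x := (1:ℝ))).add h3
      have := h1.mul (tendsto_const_nhds (x := t))
      simpa using this

lemma gen_prod {α₁ α₂ : ℝ} (hα₁ : 0 < α₁) (hα₂ : 0 < α₂) {t : ℝ} (ht0 : 0 ≤ t) (ht : t < 1) :
    (∑' n, binCoeff α₁ n * t ^ n) * (∑' n, binCoeff α₂ n * t ^ n)
      = ∑' n, binCoeff (α₁ + α₂) n * t ^ n := by
  have hs₁ := summable_binCoeff_mul hα₁ ht0 ht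
  have hs₂ := summable_binCoeff_mul hα₂ ht0 ht
  have hn₁ : Summable (fun n => ‖binCoeff α₁ n * t ^ n‖) := by
    simpa only [Real.norm_of_nonneg (mul_nonneg (binCoeff_pos hα₁ _).le (pow_nonneg ht0 _))] using hs₁
  have hn₂ : Summable (fun n => ‖binCoeff α₂ n * t ^ n‖) := by
    simpa only [Real.norm_of_nonneg (mul_nonneg (binCoeff_pos hα₂ _).le (pow_nonneg ht0 _))] using hs₂
  rw [tsum_mul_tsum_eq_tsum_sum_antidiagonal_of_summable_norm hn₁ hn₂]
  congr 1
  funext n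
  rw [← binCoeff_conv hα₁ hα₂ n, Finset.sum_mul]
  refine Finset.sum_congr rfl fun p hp => ?_
  rw [Finset.HasAntidiagonal.mem_antidiagonal] at hp
  rw [← hp, pow_add]
  ring


lemma normSq_expand (A : ℂ) (t : ℂ) (B : ℝ) :
    Complex.normSq (A - t * (B : ℂ))
      = Complex.normSq A - 2 * B * (A * (starRingEnd ℂ) t).re + B ^ 2 * Complex.normSq t := by
  simp only [Complex.normSq_apply, Complex.sub_re, Complex.sub_im, Complex.mul_re, Complex.mul_im,
    Complex.conj_re, Complex.conj_im, Complex.ofReal_re, Complex.ofReal_im]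
  ring

variable {ι : Type*}

lemma cs_expand {s : Finset ι} (A : ι → ℂ) (B : ι → ℝ) (hB : ∀ p ∈ s, 0 < B p)
    (hc : 0 < ∑ p ∈ s, B p) :
    ∑ p ∈ s, Complex.normSq (A p - ((∑ q ∈ s, A q) / ((∑ q ∈ s, B q : ℝ) : ℂ)) * (B p : ℂ)) / B p
      = ∑ p ∈ s, Complex.normSq (A p) / B p
        - Complex.normSq (∑ q ∈ s, A q) / (∑ q ∈ s, B q) := by
  set c : ℝ := ∑ q ∈ s, B q with hcdef
  set t : ℂ := (∑ q ∈ s, A q) / (c : ℂ) with htdef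
  have hcne : (c : ℂ) ≠ 0 := by exact_mod_cast hc.ne'
  have hsum : ∑ q ∈ s, A q = t * (c : ℂ) := by
    rw [htdef, div_mul_cancel₀ _ hcne]
  have e1 : ∀ p ∈ s, Complex.normSq (A p - t * (B p : ℂ)) / B p
      = Complex.normSq (A p) / B p - 2 * (A p * (starRingEnd ℂ) t).re
        + B p * Complex.normSq t := by
    intro p hp
    have hBp : B p ≠ 0 := (hB p hp).ne'
    rw [normSq_expand, div_eq_iff hBp]
    field_simp
  rw [Finset.sum_congr rfl e1]
  rw [Finset.sum_add_distrib, Finset.sum_sub_distrib, ← Finset.sum_mul, ← Finset.mul_sum,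
    ← Complex.re_sum, ← Finset.sum_mul]
  rw [hsum]
  have e2 : (t * (c : ℂ) * (starRingEnd ℂ) t).re = c * Complex.normSq t := by
    have : t * (c : ℂ) * (starRingEnd ℂ) t = ((c * Complex.normSq t : ℝ) : ℂ) := by
      push_cast
      rw [show t * (c:ℂ) * (starRingEnd ℂ) t = (c:ℂ) * (t * (starRingEnd ℂ) t) by ring,
        Complex.mul_conj]
    rw [this, Complex.ofReal_re]
  have e3 : Complex.normSq (t * (c : ℂ)) / c = c * Complex.normSq t := by
    rw [Complex.normSq_mul, Complex.normSq_ofReal]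
    field_simp
  rw [e2, e3]
  ring

lemma cs_ineq {s : Finset ι} (A : ι → ℂ) (B : ι → ℝ) (hB : ∀ p ∈ s, 0 < B p)
    (hc : 0 < ∑ p ∈ s, B p) :
    Complex.normSq (∑ q ∈ s, A q) / (∑ q ∈ s, B q) ≤ ∑ p ∈ s, Complex.normSq (A p) / B p := by
  have h := cs_expand A B hB hc
  have hnn : 0 ≤ ∑ p ∈ s, Complex.normSq (A p - ((∑ q ∈ s, A q) / ((∑ q ∈ s, B q : ℝ) : ℂ)) * (B p : ℂ)) / B p :=
    Finset.sum_nonneg fun p hp => div_nonneg (Complex.normSq_nonneg _) (hB p hp).le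
  linarith

lemma cs_eq_case {s : Finset ι} (A : ι → ℂ) (B : ι → ℝ) (hB : ∀ p ∈ s, 0 < B p)
    (hc : 0 < ∑ p ∈ s, B p)
    (heq : Complex.normSq (∑ q ∈ s, A q) / (∑ q ∈ s, B q) = ∑ p ∈ s, Complex.normSq (A p) / B p) :
    ∀ p ∈ s, A p = ((∑ q ∈ s, A q) / ((∑ q ∈ s, B q : ℝ) : ℂ)) * (B p : ℂ) := by
  have h := cs_expand A B hB hc
  rw [← heq] at h
  have h0 : ∑ p ∈ s, Complex.normSq (A p - ((∑ q ∈ s, A q) / ((∑ q ∈ s, B q : ℝ) : ℂ)) * (B p : ℂ)) / B p = 0 := by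
    linarith
  have := (Finset.sum_eq_zero_iff_of_nonneg (fun p hp =>
    div_nonneg (Complex.normSq_nonneg _) (hB p hp).le)).mp h0
  intro p hp
  have hp' := this p hp
  rw [div_eq_zero_iff] at hp'
  rcases hp' with hp' | hp'
  · exact sub_eq_zero.mp (Complex.normSq_eq_zero.mp hp')
  · exact absurd hp' (hB p hp).ne'


lemma geom_struct {s r : ℕ → ℂ} (h : ∀ p q, s (p+1) * r q = s p * r (q+1))
    {p₀ q₀ : ℕ} (hs : s p₀ ≠ 0) (hr : r q₀ ≠ 0) :
    ∃ w : ℂ, (∀ n, s n = s 0 * w ^ n) ∧ (∀ n, r n = r 0 * w ^ n) := by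
  set w : ℂ := r (q₀ + 1) / r q₀ with hw
  have sstep : ∀ p, s (p + 1) = s p * w := by
    intro p
    have := h p q₀
    rw [hw, mul_div_assoc', eq_div_iff hr]
    linear_combination this
  have hsn : ∀ n, s n = s 0 * w ^ n := by
    intro n
    induction n with
    | zero => simp
    | succ n ih => rw [sstep n, ih, pow_succ]; ring
  have hsp0 : s p₀ = s 0 * w ^ p₀ := hsn p₀
  have hs0w : s p₀ ≠ 0 := hs
  have rstep : ∀ q, r (q + 1) = r q * w := by
    intro q
    have h1 := h p₀ q
    rw [sstep p₀] at h1
    -- s p₀ * w * r q = s p₀ * r (q+1)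
    have h2 : s p₀ * (w * r q - r (q + 1)) = 0 := by linear_combination h1
    rcases mul_eq_zero.mp h2 with h3 | h3
    · exact absurd h3 hs
    · have := sub_eq_zero.mp h3
      rw [← this]; ring
  refine ⟨w, hsn, fun n => ?_⟩
  induction n with
  | zero => simp
  | succ n ih => rw [rstep n, ih, pow_succ]; ring

lemma abs_lt_one_of_summable {w : ℂ} {C : ℝ} (hC : 0 < C)
    (h : Summable fun n => C * (‖w‖ ^ 2) ^ n) : ‖w‖ < 1 := by
  have h2 : Summable fun n => (‖w‖ ^ 2) ^ n := by
    have := h.div_const C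
    simpa [mul_div_assoc, mul_div_cancel_left₀ _ hC.ne'] using this
  have h3 : ‖‖w‖ ^ 2‖ < 1 := summable_geometric_iff_norm_lt_one.mp h2
  rw [Real.norm_of_nonneg (by positivity)] at h3
  nlinarith [norm_nonneg w]

lemma tsum_pointwise_eq {f g : ℕ → ℝ} (h0 : ∀ n, 0 ≤ f n) (hle : ∀ n, f n ≤ g n)
    (hg : Summable g) (h : ∑' n, f n = ∑' n, g n) : ∀ n, f n = g n := by
  intro n
  by_contra hne
  exact absurd h (ne_of_lt (Summable.tsum_lt_tsum_of_nonneg h0 hle (lt_of_le_of_ne (hle n) hne) hg))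

open Finset in
lemma fval {α : ℝ} (hα : 0 < α) (l w : ℂ) (n : ℕ) :
    ‖l * (binCoeff α n : ℂ) * w ^ n‖ ^ 2 / binCoeff α n
      = ‖l‖ ^ 2 * (binCoeff α n * (‖w‖ ^ 2) ^ n) := by
  have hc := binCoeff_pos hα n
  rw [norm_mul, norm_mul, Complex.norm_real, Real.norm_of_nonneg hc.le, norm_pow]
  rw [div_eq_iff hc.ne']
  ring

open Finset in
lemma conv_sum_eq {α₁ α₂ : ℝ} (hα₁ : 0 < α₁) (hα₂ : 0 < α₂) (l₁ l₂ w : ℂ) (n : ℕ) :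
    ∑ p ∈ antidiagonal n, (l₁ * (binCoeff α₁ p.1 : ℂ) * w ^ p.1)
        * (l₂ * (binCoeff α₂ p.2 : ℂ) * w ^ p.2)
      = l₁ * l₂ * (binCoeff (α₁ + α₂) n : ℂ) * w ^ n := by
  have hconv := binCoeff_conv hα₁ hα₂ n
  have : ((binCoeff (α₁ + α₂) n : ℝ) : ℂ)
      = ∑ p ∈ antidiagonal n, ((binCoeff α₁ p.1 : ℂ) * (binCoeff α₂ p.2 : ℂ)) := by
    rw [← hconv]; push_cast; rfl
  rw [show l₁ * l₂ * (binCoeff (α₁ + α₂) n : ℂ) * w ^ n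
      = (l₁ * l₂ * w ^ n) * ((binCoeff (α₁ + α₂) n : ℝ) : ℂ) by ring, this, Finset.mul_sum]
  refine Finset.sum_congr rfl fun p hp => ?_
  rw [Finset.HasAntidiagonal.mem_antidiagonal] at hp
  rw [← hp, pow_add]
  ring

set_option maxHeartbeats 2000000 in
/-- Equality in the log-convexity inequality for Bergman norms (stated at the level of
Taylor coefficients: the product `f₁f₂` has coefficients given by the Cauchy product,
and `fⱼ(z) = λⱼ(1-wz)^{-αⱼ}` means `aⱼ(n) = λⱼ c_{αⱼ}(n) wⁿ`). -/
theorem logconvexity_equality_iff (α₁ α₂ : ℝ) (h₁ : 1 ≤ α₁) (h₂ : 1 ≤ α₂)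
    (a₁ a₂ : ℕ → ℂ)
    (hs₁ : Summable fun n => ‖a₁ n‖ ^ 2 / binCoeff α₁ n)
    (hs₂ : Summable fun n => ‖a₂ n‖ ^ 2 / binCoeff α₂ n)
    (hn₁ : (∑' n, ‖a₁ n‖ ^ 2 / binCoeff α₁ n) ≠ 0)
    (hn₂ : (∑' n, ‖a₂ n‖ ^ 2 / binCoeff α₂ n) ≠ 0) :
    (∑' n, ‖∑ p ∈ Finset.HasAntidiagonal.antidiagonal n, a₁ p.1 * a₂ p.2‖ ^ 2 /
          binCoeff (α₁ + α₂) n) ^ ((1 : ℝ) / 2) =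
        (∑' n, ‖a₁ n‖ ^ 2 / binCoeff α₁ n) ^ ((1 : ℝ) / 2) *
          (∑' n, ‖a₂ n‖ ^ 2 / binCoeff α₂ n) ^ ((1 : ℝ) / 2) ↔
      ∃ (l₁ l₂ w : ℂ), ‖w‖ < 1 ∧
        (∀ n, a₁ n = l₁ * (binCoeff α₁ n : ℂ) * w ^ n) ∧
        (∀ n, a₂ n = l₂ * (binCoeff α₂ n : ℂ) * w ^ n) := by
  have hα₁ : (0:ℝ) < α₁ := lt_of_lt_of_le one_pos h₁
  have hα₂ : (0:ℝ) < α₂ := lt_of_lt_of_le one_pos h₂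
  have hα : (0:ℝ) < α₁ + α₂ := by linarith
  have hf0 : ∀ n, 0 ≤ ‖a₁ n‖ ^ 2 / binCoeff α₁ n :=
    fun n => div_nonneg (by positivity) (binCoeff_pos hα₁ n).le
  have hg0 : ∀ n, 0 ≤ ‖a₂ n‖ ^ 2 / binCoeff α₂ n :=
    fun n => div_nonneg (by positivity) (binCoeff_pos hα₂ n).le
  have hL0 : ∀ n, 0 ≤ ‖∑ p ∈ Finset.HasAntidiagonal.antidiagonal n, a₁ p.1 * a₂ p.2‖ ^ 2 /
      binCoeff (α₁ + α₂) n := fun n => div_nonneg (by positivity) (binCoeff_pos hα n).le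
  constructor
  · intro heq
    have hf' : Summable fun n => ‖‖a₁ n‖ ^ 2 / binCoeff α₁ n‖ := by
      simpa only [Real.norm_of_nonneg (hf0 _)] using hs₁
    have hg' : Summable fun n => ‖‖a₂ n‖ ^ 2 / binCoeff α₂ n‖ := by
      simpa only [Real.norm_of_nonneg (hg0 _)] using hs₂
    have hAB := tsum_mul_tsum_eq_tsum_sum_antidiagonal_of_summable_norm hf' hg'
    have hSsum : Summable (fun n => ∑ kl ∈ Finset.HasAntidiagonal.antidiagonal n,
        (‖a₁ kl.1‖ ^ 2 / binCoeff α₁ kl.1) *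
        (‖a₂ kl.2‖ ^ 2 / binCoeff α₂ kl.2)) :=
      summable_sum_mul_antidiagonal_of_summable_mul
        (f := fun n => ‖a₁ n‖ ^ 2 / binCoeff α₁ n)
        (g := fun n => ‖a₂ n‖ ^ 2 / binCoeff α₂ n)
        (summable_mul_of_summable_norm hf' hg')
    -- per-n : S n in normSq form
    have hSn : ∀ n, (∑ kl ∈ Finset.HasAntidiagonal.antidiagonal n,
        (‖a₁ kl.1‖ ^ 2 / binCoeff α₁ kl.1) *
        (‖a₂ kl.2‖ ^ 2 / binCoeff α₂ kl.2))
        = ∑ kl ∈ Finset.HasAntidiagonal.antidiagonal n, Complex.normSq (a₁ kl.1 * a₂ kl.2) /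
            (binCoeff α₁ kl.1 * binCoeff α₂ kl.2) := by
      intro n
      refine Finset.sum_congr rfl fun kl _ => ?_
      rw [Complex.sq_norm, Complex.sq_norm, Complex.normSq_mul, div_mul_div_comm]
    have hBpos : ∀ n, ∀ kl ∈ Finset.HasAntidiagonal.antidiagonal n,
        0 < binCoeff α₁ kl.1 * binCoeff α₂ kl.2 :=
      fun n kl _ => mul_pos (binCoeff_pos hα₁ _) (binCoeff_pos hα₂ _)
    have hBsum : ∀ n, ∑ kl ∈ Finset.HasAntidiagonal.antidiagonal n, binCoeff α₁ kl.1 * binCoeff α₂ kl.2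
        = binCoeff (α₁ + α₂) n := fun n => binCoeff_conv hα₁ hα₂ n
    have hBsum_pos : ∀ n, 0 < ∑ kl ∈ Finset.HasAntidiagonal.antidiagonal n,
        binCoeff α₁ kl.1 * binCoeff α₂ kl.2 := fun n => (hBsum n) ▸ binCoeff_pos hα n
    -- L n ≤ S n
    have hLle : ∀ n, ‖∑ p ∈ Finset.HasAntidiagonal.antidiagonal n, a₁ p.1 * a₂ p.2‖ ^ 2 /
        binCoeff (α₁ + α₂) n ≤ ∑ kl ∈ Finset.HasAntidiagonal.antidiagonal n,
        (‖a₁ kl.1‖ ^ 2 / binCoeff α₁ kl.1) *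
        (‖a₂ kl.2‖ ^ 2 / binCoeff α₂ kl.2) := by
      intro n
      rw [hSn n, Complex.sq_norm, ← hBsum n]
      exact cs_ineq _ _ (hBpos n) (hBsum_pos n)
    have hLsum : Summable (fun n => ‖∑ p ∈ Finset.HasAntidiagonal.antidiagonal n,
        a₁ p.1 * a₂ p.2‖ ^ 2 / binCoeff (α₁ + α₂) n) :=
      Summable.of_nonneg_of_le hL0 hLle hSsum
    -- from heq : tsum L = tsum f * tsum g
    rw [← Real.sqrt_eq_rpow, ← Real.sqrt_eq_rpow, ← Real.sqrt_eq_rpow] at heq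
    have hEq2 : (∑' n, ‖∑ p ∈ Finset.HasAntidiagonal.antidiagonal n, a₁ p.1 * a₂ p.2‖ ^ 2 /
        binCoeff (α₁ + α₂) n)
        = (∑' n, ‖a₁ n‖ ^ 2 / binCoeff α₁ n) *
          (∑' n, ‖a₂ n‖ ^ 2 / binCoeff α₂ n) := by
      have h1 := congrArg (fun x : ℝ => x ^ 2) heq
      simp only [mul_pow] at h1
      rwa [Real.sq_sqrt (tsum_nonneg hL0), Real.sq_sqrt (tsum_nonneg hf0),
        Real.sq_sqrt (tsum_nonneg hg0)] at h1
    rw [hAB] at hEq2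
    -- pointwise equality
    have hpt := tsum_pointwise_eq hL0 hLle hSsum hEq2
    -- relation
    have hrel : ∀ p q : ℕ, a₁ p * a₂ q =
        ((∑ kl ∈ Finset.HasAntidiagonal.antidiagonal (p + q), a₁ kl.1 * a₂ kl.2) /
          ((binCoeff (α₁ + α₂) (p + q) : ℝ) : ℂ)) *
          ((binCoeff α₁ p * binCoeff α₂ q : ℝ) : ℂ) := by
      intro p q
      have hn := hpt (p + q)
      rw [hSn (p + q), Complex.sq_norm, ← hBsum (p + q)] at hn
      have := cs_eq_case (fun kl : ℕ × ℕ => a₁ kl.1 * a₂ kl.2)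
        (fun kl : ℕ × ℕ => binCoeff α₁ kl.1 * binCoeff α₂ kl.2)
        (hBpos (p + q)) (hBsum_pos (p + q)) hn (p, q) (by simp [Finset.HasAntidiagonal.mem_antidiagonal])
      simpa [hBsum (p + q)] using this
    -- nonvanishing
    have hx₁ : ∃ p₀, a₁ p₀ ≠ 0 := by
      by_contra hcon
      push_neg at hcon
      apply hn₁
      have : ∀ n, ‖a₁ n‖ ^ 2 / binCoeff α₁ n = 0 := by
        intro n; rw [hcon n]; simp
      rw [tsum_congr this, tsum_zero]
    have hx₂ : ∃ q₀, a₂ q₀ ≠ 0 := by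
      by_contra hcon
      push_neg at hcon
      apply hn₂
      have : ∀ n, ‖a₂ n‖ ^ 2 / binCoeff α₂ n = 0 := by
        intro n; rw [hcon n]; simp
      rw [tsum_congr this, tsum_zero]
    obtain ⟨p₀, hp₀⟩ := hx₁
    obtain ⟨q₀, hq₀⟩ := hx₂
    set sfun : ℕ → ℂ := fun n => a₁ n / ((binCoeff α₁ n : ℝ) : ℂ) with hsfun
    set rfun : ℕ → ℂ := fun n => a₂ n / ((binCoeff α₂ n : ℝ) : ℂ) with hrfun
    have hc₁ne : ∀ n, ((binCoeff α₁ n : ℝ) : ℂ) ≠ 0 := by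
      intro n; exact_mod_cast (binCoeff_pos hα₁ n).ne'
    have hc₂ne : ∀ n, ((binCoeff α₂ n : ℝ) : ℂ) ≠ 0 := by
      intro n; exact_mod_cast (binCoeff_pos hα₂ n).ne'
    have hsr : ∀ p q : ℕ, sfun p * rfun q =
        (∑ kl ∈ Finset.HasAntidiagonal.antidiagonal (p + q), a₁ kl.1 * a₂ kl.2) /
          ((binCoeff (α₁ + α₂) (p + q) : ℝ) : ℂ) := by
      intro p q
      rw [hsfun, hrfun]
      simp only
      rw [div_mul_div_comm, hrel p q]
      rw [mul_div_assoc, Complex.ofReal_mul]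
      rw [div_self (mul_ne_zero (hc₁ne p) (hc₂ne q)), mul_one]
    have hkey : ∀ p q : ℕ, sfun (p + 1) * rfun q = sfun p * rfun (q + 1) := by
      intro p q
      rw [hsr, hsr, show p + 1 + q = p + (q + 1) from by omega]
    have hsp₀ : sfun p₀ ≠ 0 := div_ne_zero hp₀ (hc₁ne p₀)
    have hrq₀ : rfun q₀ ≠ 0 := div_ne_zero hq₀ (hc₂ne q₀)
    obtain ⟨w, hsw, hrw⟩ := geom_struct hkey hsp₀ hrq₀
    have ha₁ : ∀ n, a₁ n = sfun 0 * (binCoeff α₁ n : ℂ) * w ^ n := by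
      intro n
      have : a₁ n = sfun n * ((binCoeff α₁ n : ℝ) : ℂ) := by
        rw [hsfun]; simp only; rw [div_mul_cancel₀ _ (hc₁ne n)]
      rw [this, hsw n]; ring
    have ha₂ : ∀ n, a₂ n = rfun 0 * (binCoeff α₂ n : ℂ) * w ^ n := by
      intro n
      have : a₂ n = rfun n * ((binCoeff α₂ n : ℝ) : ℂ) := by
        rw [hrfun]; simp only; rw [div_mul_cancel₀ _ (hc₂ne n)]
      rw [this, hrw n]; ring
    refine ⟨sfun 0, rfun 0, w, ?_, ha₁, ha₂⟩
    -- |w| < 1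
    rcases eq_or_ne w 0 with hw0 | hw0
    · rw [hw0]; simp
    · have hl₁ : sfun 0 ≠ 0 := by
        intro h0
        apply hsp₀
        rw [hsw p₀, h0, zero_mul]
      have hC : 0 < ‖sfun 0‖ ^ 2 := pow_pos (norm_pos_iff.mpr hl₁) 2
      apply abs_lt_one_of_summable hC
      refine Summable.of_nonneg_of_le
        (f := fun n => ‖a₁ n‖ ^ 2 / binCoeff α₁ n)
        (fun n => by positivity) (fun n => ?_) hs₁
      show ‖sfun 0‖ ^ 2 * (‖w‖ ^ 2) ^ n ≤
        ‖a₁ n‖ ^ 2 / binCoeff α₁ n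
      rw [ha₁ n, fval hα₁]
      have h1 : (1:ℝ) ≤ binCoeff α₁ n := one_le_binCoeff h₁ n
      have h2 : (0:ℝ) ≤ (‖w‖ ^ 2) ^ n := by positivity
      nlinarith [mul_nonneg (mul_nonneg hC.le h2) (sub_nonneg.mpr h1)]
  · rintro ⟨l₁, l₂, w, hw, e₁, e₂⟩
    set t : ℝ := ‖w‖ ^ 2 with htdef
    have ht0 : 0 ≤ t := by rw [htdef]; positivity
    have ht1 : t < 1 := by rw [htdef]; nlinarith [norm_nonneg w]
    have hG₁ := summable_binCoeff_mul hα₁ ht0 ht1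
    have hG₂ := summable_binCoeff_mul hα₂ ht0 ht1
    have hG := summable_binCoeff_mul hα ht0 ht1
    have T1 : (∑' n, ‖a₁ n‖ ^ 2 / binCoeff α₁ n)
        = ‖l₁‖ ^ 2 * ∑' n, binCoeff α₁ n * t ^ n := by
      rw [← tsum_mul_left]
      exact tsum_congr fun n => by rw [e₁ n, fval hα₁]
    have T2 : (∑' n, ‖a₂ n‖ ^ 2 / binCoeff α₂ n)
        = ‖l₂‖ ^ 2 * ∑' n, binCoeff α₂ n * t ^ n := by
      rw [← tsum_mul_left]
      exact tsum_congr fun n => by rw [e₂ n, fval hα₂]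
    have T3 : (∑' n, ‖∑ p ∈ Finset.HasAntidiagonal.antidiagonal n, a₁ p.1 * a₂ p.2‖ ^ 2 /
        binCoeff (α₁ + α₂) n)
        = (‖l₁‖ ^ 2 * ‖l₂‖ ^ 2) * ∑' n, binCoeff (α₁ + α₂) n * t ^ n := by
      rw [← tsum_mul_left]
      refine tsum_congr fun n => ?_
      have hsum : ∑ p ∈ Finset.HasAntidiagonal.antidiagonal n, a₁ p.1 * a₂ p.2
          = (l₁ * l₂) * (binCoeff (α₁ + α₂) n : ℂ) * w ^ n := by
        rw [← conv_sum_eq hα₁ hα₂ l₁ l₂ w n]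
        exact Finset.sum_congr rfl fun p _ => by rw [e₁ p.1, e₂ p.2]
      rw [hsum, fval hα (l₁ * l₂) w n, norm_mul]
      ring
    rw [T1, T2, T3, ← gen_prod hα₁ hα₂ ht0 ht1]
    rw [← Real.sqrt_eq_rpow, ← Real.sqrt_eq_rpow, ← Real.sqrt_eq_rpow]
    rw [show ‖l₁‖ ^ 2 * ‖l₂‖ ^ 2 *
        ((∑' n, binCoeff α₁ n * t ^ n) * ∑' n, binCoeff α₂ n * t ^ n)
        = (‖l₁‖ ^ 2 * ∑' n, binCoeff α₁ n * t ^ n) *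
          (‖l₂‖ ^ 2 * ∑' n, binCoeff α₂ n * t ^ n) by ring]
    exact Real.sqrt_mul (mul_nonneg (by positivity)
      (tsum_nonneg fun n => mul_nonneg (binCoeff_pos hα₁ n).le (pow_nonneg ht0 n))) _
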